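/- Let L ⊆ S_n be a linear subspace, c ∈ S_n, and 0 < k ≤ n. Suppose L contains a matrix x of the block form x = [[A, 0], [0, 0]] where A is a k×k positive definite matrix. Then (K_n,L,c) is in weak status (weakly feasible or weakly infeasible) if and only if the subproblem π̄_k(K_n,L,c) = (K_{n−k}, π̄_k(L), π̄_k(c)) is in weak status. -/

import Mathlib

open Matrix

attribute [local instance] Matrix.frobeniusNormedAddCommGroup

noncomputable section

abbrev MS (n : ℕ) := Matrix (Fin n) (Fin n) ℝ

def PSD (n : ℕ) : Set (MS n) := {x | x.PosSemidef}

def affSet {n : ℕ} (L : Submodule ℝ (MS n)) (c : MS n) : Set (MS n) :=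
  {x | ∃ l ∈ L, x = l + c}

/-- `dist(C, D) = inf {‖x − y‖ : x ∈ C, y ∈ D}` in the Frobenius norm. -/
def sdist {m : ℕ} (C D : Set (MS m)) : ℝ := sInf (Set.image2 dist C D)

/-- The problem with affine feasible set `D` (of symmetric matrices) is in weak status:
either weakly feasible (`D` meets `K_m` but not its interior, i.e. `D` contains a
positive semidefinite but no positive definite matrix), or weakly infeasible
(`D ∩ K_m = ∅` and `dist(K_m, D) = 0`). -/
def weakStatus {m : ℕ} (D : Set (MS m)) : Prop :=
  ((∃ u ∈ D, u.PosSemidef) ∧ ¬ ∃ u ∈ D, u.PosDef) ∨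
    ((¬ ∃ u ∈ D, u.PosSemidef) ∧ sdist (PSD m) D = 0)

/-- The principal submatrix of `x` with rows and columns in `[a, b)`; for `a = k`,
`b = n` this is `π̄_k(x)`, the lower-right `(n−k)×(n−k)` principal submatrix. -/
def blk (n a b : ℕ) (x : MS n) : Matrix (Fin (b - a)) (Fin (b - a)) ℝ :=
  fun i j => if h : a + i.1 < n ∧ a + j.1 < n then x ⟨a + i.1, h.1⟩ ⟨a + j.1, h.2⟩ else 0

/-- `x` has the block form whose lower-right `(n−a)×(n−a)` principal submatrix equals
`[[Â, 0], [0, 0]]` with `Â` positive definite, occupying rows/columns `[a, b)`. -/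
def staircase (n a b : ℕ) (x : MS n) : Prop :=
  (blk n a b x).PosDef ∧
    ∀ i j : Fin n, a ≤ i.1 → a ≤ j.1 → (b ≤ i.1 ∨ b ≤ j.1) → x i j = 0


lemma isHerm_of_isSymm {m : ℕ} {M : MS m} (h : M.IsSymm) : M.IsHermitian := by
  ext i j
  rw [conjTranspose_apply, star_trivial]
  exact h.apply i j

lemma norm_eq_sqrt {m : ℕ} (N : MS m) : ‖N‖ = Real.sqrt (∑ i, ∑ j, (N i j) ^ 2) := by
  rw [frobenius_norm_def, Real.sqrt_eq_rpow]
  congr 1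
  refine Finset.sum_congr rfl fun i _ => Finset.sum_congr rfl fun j _ => ?_
  rw [Real.norm_eq_abs, Real.rpow_two, sq_abs]

lemma dot_le {m : ℕ} (N : MS m) (v w : Fin m → ℝ) :
    v ⬝ᵥ N *ᵥ w ≤ ‖N‖ * Real.sqrt (∑ i, v i ^ 2) * Real.sqrt (∑ i, w i ^ 2) := by
  have h1 : (v ⬝ᵥ N *ᵥ w) ^ 2 ≤ (∑ i, v i ^ 2) * ∑ i, (N *ᵥ w) i ^ 2 :=
    Finset.sum_mul_sq_le_sq_mul_sq Finset.univ v (N *ᵥ w)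
  have h2 : ∑ i, (N *ᵥ w) i ^ 2 ≤ (∑ i, ∑ j, (N i j) ^ 2) * ∑ j, w j ^ 2 := by
    rw [Finset.sum_mul]
    refine Finset.sum_le_sum fun i _ => ?_
    exact Finset.sum_mul_sq_le_sq_mul_sq Finset.univ (fun j => N i j) w
  have hP : (0:ℝ) ≤ ∑ i, v i ^ 2 := Finset.sum_nonneg fun _ _ => sq_nonneg _
  have hQ : (0:ℝ) ≤ ∑ i, w i ^ 2 := Finset.sum_nonneg fun _ _ => sq_nonneg _
  have hN : (0:ℝ) ≤ ∑ i, ∑ j, (N i j) ^ 2 :=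
    Finset.sum_nonneg fun _ _ => Finset.sum_nonneg fun _ _ => sq_nonneg _
  have key : (v ⬝ᵥ N *ᵥ w) ^ 2 ≤ ((∑ i, ∑ j, (N i j) ^ 2) * (∑ i, v i ^ 2)) * ∑ i, w i ^ 2 := by
    calc (v ⬝ᵥ N *ᵥ w) ^ 2 ≤ (∑ i, v i ^ 2) * ∑ i, (N *ᵥ w) i ^ 2 := h1
    _ ≤ (∑ i, v i ^ 2) * ((∑ i, ∑ j, (N i j) ^ 2) * ∑ j, w j ^ 2) := by
        exact mul_le_mul_of_nonneg_left h2 hP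
    _ = _ := by ring
  calc v ⬝ᵥ N *ᵥ w ≤ |v ⬝ᵥ N *ᵥ w| := le_abs_self _
  _ = Real.sqrt ((v ⬝ᵥ N *ᵥ w) ^ 2) := (Real.sqrt_sq_eq_abs _).symm
  _ ≤ Real.sqrt (((∑ i, ∑ j, (N i j) ^ 2) * (∑ i, v i ^ 2)) * ∑ i, w i ^ 2) :=
      Real.sqrt_le_sqrt key
  _ = ‖N‖ * Real.sqrt (∑ i, v i ^ 2) * Real.sqrt (∑ i, w i ^ 2) := by
      rw [Real.sqrt_mul (mul_nonneg hN hP), Real.sqrt_mul hN, norm_eq_sqrt]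

lemma sum_split {n k : ℕ} (hkn : k ≤ n) (g : Fin n → ℝ) :
    ∑ i, g i = (∑ p : Fin k, g ⟨p.1, by omega⟩) + ∑ q : Fin (n-k), g ⟨k + q.1, by omega⟩ := by
  rw [← (finSumFinEquiv.trans (finCongr (by omega : k + (n-k) = n))).sum_comp g,
    Fintype.sum_sum_type]
  congr 1

/-- bottom restriction of a vector -/
def bot (n k : ℕ) (v : Fin n → ℝ) : Fin (n-k) → ℝ := fun q => v ⟨k + q.1, by omega⟩

/-- extension by zero of a bottom vector -/
def ext' (n k : ℕ) (w : Fin (n-k) → ℝ) : Fin n → ℝ :=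
  fun i => if h : k ≤ i.1 ∧ i.1 - k < n - k then w ⟨i.1 - k, h.2⟩ else 0

variable {n k : ℕ}

lemma ext'_lt (w : Fin (n-k) → ℝ) (i : Fin n) (h : i.1 < k) : ext' n k w i = 0 := by
  rw [ext', dif_neg]; omega

lemma bot_ext' (hkn : k ≤ n) (w : Fin (n-k) → ℝ) : bot n k (ext' n k w) = w := by
  funext q
  have h : k ≤ k + q.1 ∧ (k + q.1) - k < n - k := by omega
  rw [bot, ext', dif_pos h]
  refine congr_arg w (Fin.ext ?_)
  simp

lemma ext'_ne_zero (hkn : k ≤ n) (w : Fin (n-k) → ℝ) (hw : w ≠ 0) : ext' n k w ≠ 0 := by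
  intro h
  apply hw
  rw [← bot_ext' hkn w, h]
  funext q
  rfl

lemma blk_apply (hkn : k ≤ n) (u : MS n) (q q' : Fin (n-k)) :
    blk n k n u q q' = u ⟨k + q.1, by omega⟩ ⟨k + q'.1, by omega⟩ := by
  rw [blk, dif_pos ⟨by omega, by omega⟩]

/-- bottom-supported bilinear form identity -/
lemma dot_bot (hkn : k ≤ n) (u : MS n) (v w : Fin n → ℝ) (hv : ∀ i : Fin n, i.1 < k → v i = 0)
    (hw : ∀ i : Fin n, i.1 < k → w i = 0) :
    v ⬝ᵥ u *ᵥ w = (bot n k v) ⬝ᵥ (blk n k n u) *ᵥ (bot n k w) := by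
  have hin : ∀ i : Fin n, (u *ᵥ w) i = ∑ q' : Fin (n-k), u i ⟨k + q'.1, by omega⟩ * bot n k w q' := by
    intro i
    show ∑ j, u i j * w j = _
    rw [sum_split hkn (fun j => u i j * w j)]
    have : (∑ p : Fin k, u i ⟨p.1, by omega⟩ * w ⟨p.1, by omega⟩) = 0 :=
      Finset.sum_eq_zero fun p _ => by rw [hw ⟨p.1, by omega⟩ p.2, mul_zero]
    rw [this, zero_add]
    rfl
  show ∑ i, v i * (u *ᵥ w) i = ∑ q, bot n k v q * (blk n k n u *ᵥ bot n k w) q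
  rw [sum_split hkn (fun i => v i * (u *ᵥ w) i)]
  have : (∑ p : Fin k, v ⟨p.1, by omega⟩ * (u *ᵥ w) ⟨p.1, by omega⟩) = 0 :=
    Finset.sum_eq_zero fun p _ => by rw [hv ⟨p.1, by omega⟩ p.2, zero_mul]
  rw [this, zero_add]
  refine Finset.sum_congr rfl fun q _ => ?_
  rw [hin]
  show bot n k v q * _ = bot n k v q * _
  congr 1
  show _ = ∑ q', blk n k n u q q' * bot n k w q'
  refine Finset.sum_congr rfl fun q' _ => ?_
  rw [blk_apply hkn]

/-- top quadratic form identity for staircase-zero matrices -/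
lemma dot_top (hkn : k ≤ n) (x : MS n)
    (hx0 : ∀ i j : Fin n, k ≤ i.1 ∨ k ≤ j.1 → x i j = 0) (v : Fin n → ℝ) :
    v ⬝ᵥ x *ᵥ v = (fun p : Fin k => v ⟨p.1, by omega⟩) ⬝ᵥ
      (blk n 0 k x) *ᵥ (fun p : Fin k => v ⟨p.1, by omega⟩) := by
  have hin : ∀ i : Fin n, (x *ᵥ v) i = ∑ p' : Fin k, x i ⟨p'.1, by omega⟩ * v ⟨p'.1, by omega⟩ := by
    intro i
    show ∑ j, x i j * v j = _
    rw [sum_split hkn (fun j => x i j * v j)]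
    have : (∑ q : Fin (n-k), x i ⟨k + q.1, by omega⟩ * v ⟨k + q.1, by omega⟩) = 0 :=
      Finset.sum_eq_zero fun q _ => by
        rw [hx0 i ⟨k + q.1, by omega⟩ (Or.inr (by simp)), zero_mul]
    rw [this, add_zero]
  show ∑ i, v i * (x *ᵥ v) i = _
  rw [sum_split hkn (fun i => v i * (x *ᵥ v) i)]
  have : (∑ q : Fin (n-k), v ⟨k + q.1, by omega⟩ * (x *ᵥ v) ⟨k + q.1, by omega⟩) = 0 := by
    refine Finset.sum_eq_zero fun q _ => ?_
    rw [hin]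
    have : (∑ p' : Fin k, x ⟨k + q.1, by omega⟩ ⟨p'.1, by omega⟩ * v ⟨p'.1, by omega⟩) = 0 :=
      Finset.sum_eq_zero fun p' _ => by
        rw [hx0 ⟨k + q.1, by omega⟩ ⟨p'.1, by omega⟩ (Or.inl (by simp)), zero_mul]
    rw [this, mul_zero]
  rw [this, add_zero]
  refine Finset.sum_congr rfl fun p _ => ?_
  show v _ * _ = v _ * _
  congr 1
  rw [hin]
  show _ = ∑ p', blk n 0 k x _ p' * _
  refine Finset.sum_congr rfl fun p' _ => ?_
  have hp : (0 + p.1 < n ∧ 0 + p'.1 < n) := ⟨by omega, by omega⟩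
  rw [blk, dif_pos hp]
  have e1 : (⟨0 + p.1, hp.1⟩ : Fin n) = ⟨p.1, by omega⟩ := Fin.ext (Nat.zero_add _)
  have e2 : (⟨0 + p'.1, hp.2⟩ : Fin n) = ⟨p'.1, by omega⟩ := Fin.ext (Nat.zero_add _)
  rw [e1, e2]

variable {n k : ℕ}

lemma blk_linear (hkn : k ≤ n) (u v : MS n) (s t : ℝ) :
    blk n k n (s • u + t • v) = s • blk n k n u + t • blk n k n v := by
  funext q q'
  simp only [blk_apply hkn, Matrix.add_apply, Matrix.smul_apply, smul_eq_mul]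

lemma blk_sub (hkn : k ≤ n) (u v : MS n) : blk n k n (u - v) = blk n k n u - blk n k n v := by
  funext q q'
  simp only [blk_apply hkn, Matrix.sub_apply]

lemma blk_norm_le (hkn : k ≤ n) (u : MS n) : ‖blk n k n u‖ ≤ ‖u‖ := by
  rw [norm_eq_sqrt, norm_eq_sqrt]
  apply Real.sqrt_le_sqrt
  have key : ∀ j : Fin n, (∑ q' : Fin (n-k), (u j ⟨k + q'.1, by omega⟩)^2) ≤ ∑ j' , (u j j')^2 := by
    intro j
    rw [sum_split hkn (fun j' => (u j j')^2)]
    have h1 : (0:ℝ) ≤ ∑ p : Fin k, (u j ⟨p.1, by omega⟩)^2 :=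
      Finset.sum_nonneg fun _ _ => sq_nonneg _
    linarith [le_refl (∑ q' : Fin (n-k), (u j ⟨k + q'.1, by omega⟩)^2)]
  calc ∑ q, ∑ q', (blk n k n u q q')^2
      = ∑ q : Fin (n-k), ∑ q' : Fin (n-k), (u ⟨k + q.1, by omega⟩ ⟨k + q'.1, by omega⟩)^2 := by
        refine Finset.sum_congr rfl fun q _ => Finset.sum_congr rfl fun q' _ => ?_
        rw [blk_apply hkn]
    _ ≤ ∑ q : Fin (n-k), ∑ j', (u ⟨k + q.1, by omega⟩ j')^2 :=
        Finset.sum_le_sum fun q _ => key _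
    _ ≤ ∑ j, ∑ j', (u j j')^2 := by
        rw [sum_split hkn (fun j => ∑ j', (u j j')^2)]
        have h1 : (0:ℝ) ≤ ∑ p : Fin k, ∑ j', (u ⟨p.1, by omega⟩ j')^2 :=
          Finset.sum_nonneg fun _ _ => Finset.sum_nonneg fun _ _ => sq_nonneg _
        linarith [le_refl (∑ q : Fin (n-k), ∑ j', (u ⟨k + q.1, by omega⟩ j')^2)]

lemma blk_isSymm (hkn : k ≤ n) {u : MS n} (hu : u.IsSymm) : (blk n k n u).IsSymm := by
  ext q q'
  rw [Matrix.transpose_apply, blk_apply hkn, blk_apply hkn]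
  exact hu.apply _ _

lemma blk_posSemidef (hkn : k ≤ n) {u : MS n} (hu : u.PosSemidef) :
    (blk n k n u).PosSemidef := by
  refine posSemidef_iff_dotProduct_mulVec.mpr ⟨?_, ?_⟩
  · ext q q'
    rw [conjTranspose_apply, star_trivial, blk_apply hkn, blk_apply hkn]
    have := hu.1
    calc u ⟨k + q'.1, by omega⟩ ⟨k + q.1, by omega⟩
        = uᴴ ⟨k + q.1, by omega⟩ ⟨k + q'.1, by omega⟩ := by rw [conjTranspose_apply, star_trivial]
      _ = u _ _ := by rw [this]
  · intro w
    have h := hu.dotProduct_mulVec_nonneg (ext' n k w)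
    rw [star_trivial] at h ⊢
    rwa [dot_bot hkn u (ext' n k w) (ext' n k w) (fun i hi => ext'_lt w i hi)
      (fun i hi => ext'_lt w i hi), bot_ext' hkn] at h

lemma blk_posDef (hkn : k ≤ n) {u : MS n} (hu : u.PosDef) : (blk n k n u).PosDef := by
  refine posDef_iff_dotProduct_mulVec.mpr ⟨(blk_posSemidef hkn hu.posSemidef).1, fun w hw => ?_⟩
  have h := hu.dotProduct_mulVec_pos (ext'_ne_zero hkn w hw)
  rw [star_trivial] at h ⊢
  rwa [dot_bot hkn u (ext' n k w) (ext' n k w) (fun i hi => ext'_lt w i hi)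
    (fun i hi => ext'_lt w i hi), bot_ext' hkn] at h

lemma quad_smul {m : ℕ} (A : Matrix (Fin m) (Fin m) ℝ) (c : ℝ) (v : Fin m → ℝ) :
    (c • v) ⬝ᵥ A *ᵥ (c • v) = c^2 * (v ⬝ᵥ A *ᵥ v) := by
  rw [smul_dotProduct, Matrix.mulVec_smul, dotProduct_smul]
  simp [smul_eq_mul]; ring

lemma exists_coercive {m : ℕ} {A : Matrix (Fin m) (Fin m) ℝ} (hA : A.PosDef) :
    ∃ a > 0, ∀ v : Fin m → ℝ, a * (∑ i, v i ^ 2) ≤ v ⬝ᵥ A *ᵥ v := by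
  rcases Nat.eq_zero_or_pos m with hm | hm
  · refine ⟨1, one_pos, fun v => ?_⟩
    subst hm
    simp [dotProduct]
  · haveI : Nonempty (Fin m) := ⟨⟨0, hm⟩⟩
    have hcomp : IsCompact (Metric.sphere (0 : Fin m → ℝ) 1) := isCompact_sphere _ _
    have hne : (Metric.sphere (0 : Fin m → ℝ) 1).Nonempty :=
      NormedSpace.sphere_nonempty.mpr zero_le_one
    have hcont : Continuous fun v : Fin m → ℝ => v ⬝ᵥ A *ᵥ v := by
      show Continuous fun v : Fin m → ℝ => ∑ i, v i * ∑ j, A i j * v j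
      apply continuous_finset_sum
      intro i _
      exact (continuous_apply i).mul
        (continuous_finset_sum _ fun j _ => (continuous_const.mul (continuous_apply j)))
    obtain ⟨v₀, hv₀S, hv₀min⟩ := hcomp.exists_isMinOn hne hcont.continuousOn
    have hv₀ : v₀ ≠ 0 := by
      intro h
      rw [Metric.mem_sphere, h, dist_self] at hv₀S
      norm_num at hv₀S
    have ha' : 0 < v₀ ⬝ᵥ A *ᵥ v₀ := by simpa [star_trivial] using hA.dotProduct_mulVec_pos hv₀
    have hmpos : (0:ℝ) < m := by exact_mod_cast hm
    refine ⟨(v₀ ⬝ᵥ A *ᵥ v₀) / m, div_pos ha' hmpos, fun v => ?_⟩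
    rcases eq_or_ne v 0 with rfl | hv
    · simp [dotProduct]
    · have hnv : 0 < ‖v‖ := norm_pos_iff.mpr hv
      set u := ‖v‖⁻¹ • v with hu
      have huS : u ∈ Metric.sphere (0 : Fin m → ℝ) 1 := by
        simp [hu, Metric.mem_sphere, dist_zero_right, norm_smul, abs_of_pos (inv_pos.mpr hnv),
          inv_mul_cancel₀ hnv.ne']
      have hmin : v₀ ⬝ᵥ A *ᵥ v₀ ≤ u ⬝ᵥ A *ᵥ u := hv₀min huS
      have hveq : v = ‖v‖ • u := by
        rw [hu, smul_smul, mul_inv_cancel₀ hnv.ne', one_smul]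
      have hq : v ⬝ᵥ A *ᵥ v = ‖v‖^2 * (u ⬝ᵥ A *ᵥ u) := by
        conv_lhs => rw [hveq]
        exact quad_smul A ‖v‖ u
      have hsum : (∑ i, v i ^ 2) ≤ m * ‖v‖^2 := by
        have : (∑ i, v i ^ 2) ≤ ∑ _i : Fin m, ‖v‖^2 := by
          refine Finset.sum_le_sum fun i _ => ?_
          have h1 := norm_le_pi_norm v i
          calc v i ^ 2 = ‖v i‖^2 := by rw [Real.norm_eq_abs, sq_abs]
            _ ≤ ‖v‖^2 := pow_le_pow_left₀ (norm_nonneg _) h1 2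
        simpa [Finset.sum_const, Finset.card_univ, nsmul_eq_mul] using this
      calc (v₀ ⬝ᵥ A *ᵥ v₀) / m * (∑ i, v i ^ 2)
          ≤ (v₀ ⬝ᵥ A *ᵥ v₀) / m * (m * ‖v‖^2) :=
            mul_le_mul_of_nonneg_left hsum (le_of_lt (div_pos ha' hmpos))
        _ = (v₀ ⬝ᵥ A *ᵥ v₀) * ‖v‖^2 := by field_simp
        _ ≤ ‖v‖^2 * (u ⬝ᵥ A *ᵥ u) := by
            rw [mul_comm]
            exact mul_le_mul_of_nonneg_left hmin (sq_nonneg _)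
        _ = v ⬝ᵥ A *ᵥ v := hq.symm

lemma isSymm_posDef_aux {m : ℕ} {M : MS m} (h : M.IsSymm)
    (h2 : ∀ v : Fin m → ℝ, v ≠ 0 → 0 < v ⬝ᵥ M *ᵥ v) : M.PosDef := by
  refine posDef_iff_dotProduct_mulVec.mpr ⟨isHerm_of_isSymm h, fun v hv => ?_⟩
  simpa [star_trivial] using h2 v hv

lemma core (hkn : k ≤ n) (u x : MS n) (hu : u.IsSymm) (hxs : x.IsSymm)
    {a : ℝ} (ha : 0 < a)
    (hax : ∀ v : Fin n → ℝ,
      a * (∑ i, (if i.1 < k then v i else 0) ^ 2) ≤ v ⬝ᵥ x *ᵥ v)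
    {lam : ℝ} (hlam : 0 < lam)
    (hbot : ∀ w : Fin (n-k) → ℝ, lam * (∑ q, w q ^ 2) ≤ w ⬝ᵥ (blk n k n u) *ᵥ w) :
    ∃ t : ℝ, 0 ≤ t ∧ (u + t • x).PosDef := by
  set M := ‖u‖ with hMdef
  have hM : 0 ≤ M := norm_nonneg u
  set t := (M*lam + 2*M^2 + lam + lam^2)/(lam*a) with htdef
  have ht : 0 ≤ t := by positivity
  have hTa : lam*(t*a) = M*lam + 2*M^2 + lam + lam^2 := by
    rw [htdef]; field_simp
  refine ⟨t, ht, ?_⟩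
  apply isSymm_posDef_aux
  · show (u + t • x)ᵀ = u + t • x
    rw [Matrix.transpose_add, Matrix.transpose_smul, hu, hxs]
  intro v hv
  set v1 : Fin n → ℝ := fun i => if i.1 < k then v i else 0 with hv1
  set v2 : Fin n → ℝ := fun i => if i.1 < k then 0 else v i with hv2
  have hv12 : v = v1 + v2 := by
    funext i; by_cases h : i.1 < k <;> simp [hv1, hv2, h]
  set s := Real.sqrt (∑ i, v1 i ^ 2) with hs
  set r := Real.sqrt (∑ i, v2 i ^ 2) with hr
  have hsn : 0 ≤ s := Real.sqrt_nonneg _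
  have hrn : 0 ≤ r := Real.sqrt_nonneg _
  have hs2 : s^2 = ∑ i, v1 i ^ 2 := Real.sq_sqrt (Finset.sum_nonneg fun _ _ => sq_nonneg _)
  have hr2 : r^2 = ∑ i, v2 i ^ 2 := Real.sq_sqrt (Finset.sum_nonneg fun _ _ => sq_nonneg _)
  have hpos : 0 < s^2 + r^2 := by
    rw [hs2, hr2]
    have hsum : (∑ i, v1 i ^ 2) + (∑ i, v2 i ^ 2) = ∑ i, v i ^ 2 := by
      rw [← Finset.sum_add_distrib]
      refine Finset.sum_congr rfl fun i _ => ?_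
      by_cases h : i.1 < k <;> simp [hv1, hv2, h]
    rw [hsum]
    obtain ⟨i, hi⟩ := Function.ne_iff.mp hv
    exact Finset.sum_pos' (fun j _ => sq_nonneg _)
      ⟨i, Finset.mem_univ i, lt_of_le_of_ne (sq_nonneg _) (Ne.symm (pow_ne_zero 2 hi))⟩
  -- lower bounds for bilinear pieces
  have hb : ∀ w z : Fin n → ℝ, -(‖u‖ * Real.sqrt (∑ i, w i ^2) * Real.sqrt (∑ i, z i ^2))
      ≤ w ⬝ᵥ u *ᵥ z := by
    intro w z
    have := dot_le u (-w) z
    rw [neg_dotProduct] at this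
    have hneg : (∑ i, (-w) i ^ 2) = ∑ i, w i ^ 2 := by
      refine Finset.sum_congr rfl fun i _ => by simp
    rw [hneg] at this
    linarith
  have hb11 : -(M * s * s) ≤ v1 ⬝ᵥ u *ᵥ v1 := hb v1 v1
  have hb12 : -(M * s * r) ≤ v1 ⬝ᵥ u *ᵥ v2 := hb v1 v2
  have hb21 : -(M * r * s) ≤ v2 ⬝ᵥ u *ᵥ v1 := hb v2 v1
  have hb22 : lam * r^2 ≤ v2 ⬝ᵥ u *ᵥ v2 := by
    have hsup : ∀ i : Fin n, i.1 < k → v2 i = 0 := fun i hi => by simp [hv2, hi]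
    rw [dot_bot hkn u v2 v2 hsup hsup]
    have hQ : (∑ q, bot n k v2 q ^ 2) = ∑ i, v2 i ^ 2 := by
      rw [sum_split hkn (fun i => v2 i ^ 2)]
      have : (∑ p : Fin k, v2 ⟨p.1, by omega⟩ ^ 2) = 0 :=
        Finset.sum_eq_zero fun p _ => by rw [hsup ⟨p.1, by omega⟩ p.2]; ring
      rw [this, zero_add]
      rfl
    rw [← hr2] at hQ
    rw [← hQ]
    exact hbot (bot n k v2)
  have hxq : t * (a * s^2) ≤ t * (v ⬝ᵥ x *ᵥ v) := by
    apply mul_le_mul_of_nonneg_left _ ht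
    rw [hs2]
    exact hax v
  have hexp : v ⬝ᵥ u *ᵥ v =
      v1 ⬝ᵥ u *ᵥ v1 + v1 ⬝ᵥ u *ᵥ v2 + v2 ⬝ᵥ u *ᵥ v1 + v2 ⬝ᵥ u *ᵥ v2 := by
    conv_lhs => rw [hv12]
    rw [Matrix.mulVec_add, add_dotProduct, dotProduct_add, dotProduct_add]
    ring
  have hzv : v ⬝ᵥ (u + t • x) *ᵥ v = v ⬝ᵥ u *ᵥ v + t * (v ⬝ᵥ x *ᵥ v) := by
    rw [Matrix.add_mulVec, dotProduct_add, Matrix.smul_mulVec, dotProduct_smul,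
      smul_eq_mul]
  rw [hzv, hexp]
  have main : 0 < (t*a - M)*s^2 + lam*r^2 - 2*M*(s*r) := by
    nlinarith [sq_nonneg (lam*r - 2*M*s), mul_pos (mul_pos hlam hlam) hpos,
      mul_nonneg hlam.le (sq_nonneg s),
      mul_nonneg (mul_nonneg hlam.le hlam.le) (sq_nonneg s), hTa, hlam, hM]
  nlinarith [hb11, hb12, hb21, hb22, hxq, main]

lemma sdist_nonneg' {m : ℕ} (C D : Set (MS m)) : 0 ≤ sdist C D :=
  Real.sInf_nonneg (by rintro r ⟨c, hc, d, hd, rfl⟩; exact dist_nonneg)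

lemma sdist_le' {m : ℕ} {C D : Set (MS m)} {c d : MS m} (hc : c ∈ C) (hd : d ∈ D) :
    sdist C D ≤ dist c d :=
  csInf_le ⟨0, by rintro r ⟨c', hc', d', hd', rfl⟩; exact dist_nonneg⟩
    (Set.mem_image2_of_mem hc hd)

lemma sdist_eq_zero_of_forall {m : ℕ} {C D : Set (MS m)}
    (h : ∀ ε > 0, ∃ c ∈ C, ∃ d ∈ D, dist c d < ε) : sdist C D = 0 := by
  refine le_antisymm ?_ (sdist_nonneg' C D)
  have : ∀ ε > 0, sdist C D ≤ 0 + ε := by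
    intro ε hε
    obtain ⟨c, hc, d, hd, hlt⟩ := h ε hε
    calc sdist C D ≤ dist c d := sdist_le' hc hd
      _ ≤ 0 + ε := by linarith
  exact le_of_forall_pos_le_add this

lemma exists_pair_of_sdist {m : ℕ} {C D : Set (MS m)} (hC : C.Nonempty) (hD : D.Nonempty)
    (h : sdist C D = 0) {ε : ℝ} (hε : 0 < ε) : ∃ c ∈ C, ∃ d ∈ D, dist c d < ε := by
  have hlt : sInf (Set.image2 dist C D) < ε := by rw [← sdist]; rw [h]; exact hε
  have hbdd : BddBelow (Set.image2 dist C D) :=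
    ⟨0, by rintro r ⟨c', hc', d', hd', rfl⟩; exact dist_nonneg⟩
  have hne : (Set.image2 dist C D).Nonempty := hC.image2 hD
  obtain ⟨r, hr, hrlt⟩ := (csInf_lt_iff hbdd hne).mp hlt
  obtain ⟨c, hc, d, hd, rfl⟩ := hr
  exact ⟨c, hc, d, hd, hrlt⟩

lemma weakStatus_iff {m : ℕ} {D : Set (MS m)} (hD : D.Nonempty) :
    weakStatus D ↔ (sdist (PSD m) D = 0 ∧ ¬ ∃ u ∈ D, u.PosDef) := by
  constructor
  · rintro (⟨⟨u, hu, hpsd⟩, hnpd⟩ | ⟨hnpsd, h0⟩)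
    · refine ⟨?_, hnpd⟩
      have h1 : sdist (PSD m) D ≤ dist u u := sdist_le' hpsd hu
      rw [dist_self] at h1
      exact le_antisymm h1 (sdist_nonneg' _ _)
    · exact ⟨h0, fun ⟨u, hu, hpd⟩ => hnpsd ⟨u, hu, hpd.posSemidef⟩⟩
  · rintro ⟨h0, hnpd⟩
    by_cases hfeas : ∃ u ∈ D, u.PosSemidef
    · exact Or.inl ⟨hfeas, hnpd⟩
    · exact Or.inr ⟨hfeas, h0⟩

lemma psd_nonempty (m : ℕ) : (PSD m).Nonempty := ⟨0, Matrix.PosSemidef.zero⟩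


lemma norm_smul' {m : ℕ} (cc : ℝ) (N : MS m) : ‖cc • N‖ = |cc| * ‖N‖ := by
  rw [norm_eq_sqrt, norm_eq_sqrt, ← Real.sqrt_sq_eq_abs, ← Real.sqrt_mul (sq_nonneg cc)]
  congr 1
  rw [Finset.mul_sum]
  refine Finset.sum_congr rfl fun i _ => ?_
  rw [Finset.mul_sum]
  refine Finset.sum_congr rfl fun j _ => ?_
  rw [Matrix.smul_apply, smul_eq_mul, mul_pow]

/-- If `L` contains a matrix `x = [[A, 0], [0, 0]]` with `A` a `k×k` positive definite
matrix (`0 < k ≤ n`), then `(K_n, L, c)` is in weak status iff the subproblem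
`π̄_k(K_n, L, c) = (K_{n−k}, π̄_k(L), π̄_k(c))`, whose affine feasible set is
`π̄_k(L + c)`, is in weak status. -/
theorem stmt7 (n k : ℕ) (hk : 0 < k) (hkn : k ≤ n)
    (L : Submodule ℝ (MS n)) (hL : ∀ y ∈ L, y.IsSymm) (c : MS n) (hc : c.IsSymm)
    (x : MS n) (hxL : x ∈ L) (hx : staircase n 0 k x) :
    weakStatus (affSet L c) ↔ weakStatus (blk n k n '' affSet L c) := by
  obtain ⟨hApd, hx0'⟩ := hx
  have hx0 : ∀ i j : Fin n, k ≤ i.1 ∨ k ≤ j.1 → x i j = 0 := fun i j h =>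
    hx0' i j (Nat.zero_le _) (Nat.zero_le _) h
  have hxs : x.IsSymm := hL x hxL
  obtain ⟨a, ha, hcoA⟩ := exists_coercive hApd
  have hax : ∀ v : Fin n → ℝ,
      a * (∑ i, (if i.1 < k then v i else 0) ^ 2) ≤ v ⬝ᵥ x *ᵥ v := by
    intro v
    rw [dot_top hkn x hx0 v]
    refine le_trans (le_of_eq ?_) (hcoA _)
    congr 1
    rw [sum_split hkn (fun i => (if i.1 < k then v i else 0) ^ 2)]
    have hbot0 : (∑ q : Fin (n-k), (if (⟨k + q.1, by omega⟩ : Fin n).1 < k then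
        v ⟨k + q.1, by omega⟩ else 0) ^ 2) = 0 :=
      Finset.sum_eq_zero fun q _ => by rw [if_neg (by simp)]; ring
    rw [hbot0, add_zero]
    refine Finset.sum_congr rfl fun p _ => ?_
    rw [if_pos (by exact p.2)]
  have DA_ne : (affSet L c).Nonempty := ⟨c, 0, L.zero_mem, (zero_add c).symm⟩
  have DB_ne : (blk n k n '' affSet L c).Nonempty := DA_ne.image _
  have symmD : ∀ u ∈ affSet L c, u.IsSymm := by
    rintro u ⟨l, hl, rfl⟩
    show (l + c)ᵀ = l + c
    rw [Matrix.transpose_add, hL l hl, hc]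
  have memD : ∀ u ∈ affSet L c, ∀ t : ℝ, u + t • x ∈ affSet L c := by
    rintro u ⟨l, hl, rfl⟩ t
    exact ⟨l + t • x, L.add_mem hl (L.smul_mem t hxL), by abel⟩
  rw [weakStatus_iff DA_ne, weakStatus_iff DB_ne]
  have hPD : (∃ u ∈ affSet L c, u.PosDef) ↔
      (∃ y ∈ blk n k n '' affSet L c, y.PosDef) := by
    constructor
    · rintro ⟨u, hu, hpd⟩
      exact ⟨blk n k n u, ⟨u, hu, rfl⟩, blk_posDef hkn hpd⟩
    · rintro ⟨y, ⟨u, hu, rfl⟩, hpd⟩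
      obtain ⟨lam, hlam, hco⟩ := exists_coercive hpd
      obtain ⟨t, ht, hpd'⟩ := core hkn u x (symmD u hu) hxs ha hax hlam hco
      exact ⟨u + t • x, memD u hu t, hpd'⟩
  have hSD : sdist (PSD n) (affSet L c) = 0 ↔
      sdist (PSD (n-k)) (blk n k n '' affSet L c) = 0 := by
    constructor
    · intro h0
      apply sdist_eq_zero_of_forall
      intro ε hε
      obtain ⟨z, hz, u, hu, hd⟩ := exists_pair_of_sdist (psd_nonempty n) DA_ne h0 hε
      refine ⟨blk n k n z, blk_posSemidef hkn hz, blk n k n u, ⟨u, hu, rfl⟩, ?_⟩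
      rw [dist_eq_norm] at hd ⊢
      calc ‖blk n k n z - blk n k n u‖ = ‖blk n k n (z - u)‖ := by rw [blk_sub hkn]
        _ ≤ ‖z - u‖ := blk_norm_le hkn _
        _ < ε := hd
    · intro h0
      apply sdist_eq_zero_of_forall
      intro δ hδ
      set E : MS n := fun i j => if k ≤ i.1 ∧ i = j then 1 else 0 with hE
      have hCn : 0 ≤ ‖E‖ := norm_nonneg E
      set ε := δ / (2*‖E‖ + 1) with hεdef
      have hε : 0 < ε := div_pos hδ (by linarith)
      obtain ⟨w, hw, y, ⟨u, hu, rfl⟩, hd⟩ :=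
        exists_pair_of_sdist (psd_nonempty (n-k)) DB_ne h0 hε
      have hEsym : E.IsSymm := by
        ext i j
        show E j i = E i j
        by_cases h : i = j
        · subst h; rfl
        · show (if k ≤ (j:ℕ) ∧ j = i then (1:ℝ) else 0) = if k ≤ (i:ℕ) ∧ i = j then 1 else 0
          rw [if_neg (fun hh => h hh.2.symm), if_neg (fun hh => h hh.2)]
      have hu'sym : (u + (2*ε) • E).IsSymm := by
        show (u + (2*ε) • E)ᵀ = _
        rw [Matrix.transpose_add, Matrix.transpose_smul, symmD u hu, hEsym]
      have hblkE : blk n k n E = (1 : Matrix (Fin (n-k)) (Fin (n-k)) ℝ) := by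
        funext q q'
        rw [blk_apply hkn, Matrix.one_apply]
        by_cases h : q = q'
        · subst h
          show (if k ≤ k + q.1 ∧ _ then (1:ℝ) else 0) = _
          rw [if_pos ⟨Nat.le_add_right k q.1, rfl⟩, if_pos rfl]
        · show (if k ≤ k + q.1 ∧ (⟨k + q.1, by omega⟩ : Fin n) = ⟨k + q'.1, by omega⟩
              then (1:ℝ) else 0) = _
          rw [if_neg, if_neg h]
          rintro ⟨-, h2⟩
          have h3 : k + q.1 = k + q'.1 := congrArg Fin.val h2
          exact h (Fin.ext (by omega))
      have hbot : ∀ ω : Fin (n-k) → ℝ,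
          ε * (∑ q, ω q ^ 2) ≤ ω ⬝ᵥ blk n k n (u + (2*ε) • E) *ᵥ ω := by
        intro ω
        have hsplit : blk n k n (u + (2*ε) • E) = blk n k n u + (2*ε) • blk n k n E := by
          funext q q'
          simp only [blk_apply hkn, Matrix.add_apply, Matrix.smul_apply, smul_eq_mul]
        rw [hsplit, hblkE]
        have hq1 : ω ⬝ᵥ (blk n k n u + (2*ε) • (1 : Matrix (Fin (n-k)) (Fin (n-k)) ℝ)) *ᵥ ω
            = ω ⬝ᵥ blk n k n u *ᵥ ω + (2*ε) * (ω ⬝ᵥ (1 : Matrix (Fin (n-k)) (Fin (n-k)) ℝ) *ᵥ ω) := by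
          rw [Matrix.add_mulVec, dotProduct_add, Matrix.smul_mulVec, dotProduct_smul,
            smul_eq_mul]
        rw [hq1]
        have hqE : ω ⬝ᵥ (1 : Matrix (Fin (n-k)) (Fin (n-k)) ℝ) *ᵥ ω = ∑ q, ω q ^ 2 := by
          rw [Matrix.one_mulVec]
          exact Finset.sum_congr rfl fun q _ => by ring
        rw [hqE]
        set S := ∑ q, ω q ^ 2 with hSdef
        have hSnn : 0 ≤ S := Finset.sum_nonneg fun _ _ => sq_nonneg _
        have hwpsd : 0 ≤ ω ⬝ᵥ w *ᵥ ω := by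
          have := hw.dotProduct_mulVec_nonneg ω
          rwa [star_trivial] at this
        have hsq : Real.sqrt S * Real.sqrt S = S := Real.mul_self_sqrt hSnn
        have hdiff : -(‖blk n k n u - w‖ * Real.sqrt S * Real.sqrt S)
            ≤ ω ⬝ᵥ (blk n k n u - w) *ᵥ ω := by
          have h1 := dot_le (blk n k n u - w) (-ω) ω
          rw [neg_dotProduct] at h1
          have h2 : (∑ q, (-ω) q ^ 2) = S := by
            rw [hSdef]
            exact Finset.sum_congr rfl fun q _ => by simp
          rw [h2] at h1
          linarith
        have hnorm : ‖blk n k n u - w‖ ≤ ε := by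
          rw [norm_sub_rev]
          rw [dist_eq_norm] at hd
          linarith
        have hdec : ω ⬝ᵥ (blk n k n u - w) *ᵥ ω = ω ⬝ᵥ blk n k n u *ᵥ ω - ω ⬝ᵥ w *ᵥ ω := by
          rw [Matrix.sub_mulVec, dotProduct_sub]
        have hmul : ‖blk n k n u - w‖ * Real.sqrt S * Real.sqrt S ≤ ε * S := by
          calc ‖blk n k n u - w‖ * Real.sqrt S * Real.sqrt S
              = ‖blk n k n u - w‖ * S := by rw [mul_assoc, hsq]
            _ ≤ ε * S := mul_le_mul_of_nonneg_right hnorm hSnn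
        linarith
      obtain ⟨t, ht, hpd⟩ := core hkn (u + (2*ε) • E) x hu'sym hxs ha hax hε hbot
      refine ⟨u + (2*ε) • E + t • x, hpd.posSemidef, u + t • x, memD u hu t, ?_⟩
      rw [dist_eq_norm]
      have heq : u + (2*ε) • E + t • x - (u + t • x) = (2*ε) • E := by abel
      rw [heq, norm_smul', abs_of_pos (by linarith)]
      have hd2 : ε * (2*‖E‖+1) = δ := by
        rw [hεdef]
        field_simp
      nlinarith [hε]
  rw [hPD, hSD]
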